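/- For all natural numbers n, k, m (with the convention that a sum over an empty range is zero): ∑_{i=k}^{n−m} c(i+1, k+1) · c(n−i, m) · C(n, i) = C(k+m, k) · c(n+1, k+m+1), where c(·,·) are the unsigned Stirling numbers of the first kind and C(·,·) are binomial coefficients. -/

import Mathlib

/-- Unsigned Stirling numbers of the first kind, defined by `c(0,0) = 1`,
`c(n,k) = 0` when `k > n` or (`n ≥ 1` and `k = 0`), and
`c(n+1,k) = n·c(n,k) + c(n,k-1)`. -/
def stirling1 : ℕ → ℕ → ℕ
  | 0, 0 => 1
  | 0, _ + 1 => 0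
  | _ + 1, 0 => 0
  | n + 1, k + 1 => n * stirling1 n (k + 1) + stirling1 n k

/-- Stirling numbers of the second kind, defined by `S(0,0) = 1`,
`S(n,k) = 0` when `k > n` or (`n ≥ 1` and `k = 0`), and
`S(n+1,k) = k·S(n,k) + S(n,k-1)`. -/
def stirling2 : ℕ → ℕ → ℕ
  | 0, 0 => 1
  | 0, _ + 1 => 0
  | _ + 1, 0 => 0
  | n + 1, k + 1 => (k + 1) * stirling2 n (k + 1) + stirling2 n k

open Polynomial Finset

theorem stirling1_eq_zero' {n k : ℕ} (h : n < k) : stirling1 n k = 0 := by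
  induction n generalizing k with
  | zero => cases k with | zero => omega | succ k => rfl
  | succ n ih =>
    cases k with
    | zero => omega
    | succ k =>
      show n * stirling1 n (k + 1) + stirling1 n k = 0
      rw [ih (by omega), ih (by omega)]
      ring

/-- Ascending factorial of a ring element: `t (t+1) ⋯ (t+n-1)`. -/
def ascFac {R : Type*} [CommSemiring R] (t : R) : ℕ → R
  | 0 => 1
  | n + 1 => ascFac t n * (t + n)

@[simp] theorem ascFac_zero' {R : Type*} [CommSemiring R] (t : R) : ascFac t 0 = 1 := rfl

theorem ascFac_succ {R : Type*} [CommSemiring R] (t : R) (n : ℕ) :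
    ascFac t (n + 1) = ascFac t n * (t + n) := rfl

theorem map_ascFac {F R S : Type*} [CommSemiring R] [CommSemiring S]
    [FunLike F R S] [RingHomClass F R S] (f : F) (t : R) (n : ℕ) :
    f (ascFac t n) = ascFac (f t) n := by
  induction n with
  | zero => simp
  | succ n ih => simp [ascFac_succ, ih, map_natCast]

theorem map_ascFac' {R S : Type*} [CommSemiring R] [CommSemiring S] (f : R →+* S)
    (t : R) (n : ℕ) : f (ascFac t n) = ascFac (f t) n := by
  induction n with
  | zero => simp
  | succ n ih => simp [ascFac_succ, ih]

theorem ascFac_succ_left {R : Type*} [CommSemiring R] (t : R) (n : ℕ) :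
    ascFac t (n + 1) = t * ascFac (t + 1) n := by
  induction n with
  | zero => simp [ascFac_succ]
  | succ n ih =>
    rw [ascFac_succ, ih, ascFac_succ]
    push_cast
    ring

theorem coeff_ascFac_X {S : Type*} [CommSemiring S] (n k : ℕ) :
    (ascFac (X : S[X]) n).coeff k = (stirling1 n k : S) := by
  induction n generalizing k with
  | zero =>
    cases k with
    | zero => simp [ascFac, stirling1]
    | succ k => simp [ascFac, stirling1, coeff_one]
  | succ n ih =>
    have hn : ((n : ℕ) : S[X]) = C ((n : ℕ) : S) := by rfl
    rw [ascFac_succ, mul_add, coeff_add, hn, coeff_mul_C]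
    cases k with
    | zero =>
      rw [coeff_mul_X_zero, ih]
      cases n with
      | zero => simp [stirling1]
      | succ n =>
        simp [show stirling1 (n+1) 0 = 0 from rfl, show stirling1 (n+2) 0 = 0 from rfl]
    | succ k =>
      rw [coeff_mul_X, ih, ih]
      show (stirling1 n k : S) + (stirling1 n (k+1) : S) * (n : S)
        = ((n * stirling1 n (k+1) + stirling1 n k : ℕ) : S)
      push_cast; ring

theorem coeff_ascFac_X_add_one {S : Type*} [CommSemiring S] (n k : ℕ) :
    (ascFac ((X : S[X]) + 1) n).coeff k = (stirling1 (n + 1) (k + 1) : S) := by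
  have h := ascFac_succ_left (X : S[X]) n
  have := congrArg (fun p => Polynomial.coeff p (k + 1)) h
  simpa [coeff_X_mul, coeff_ascFac_X] using this.symm

theorem natDegree_ascFac_X_add_one_le {S : Type*} [CommSemiring S] (n : ℕ) :
    (ascFac ((X : S[X]) + 1) n).natDegree ≤ n := by
  induction n with
  | zero => simp [Polynomial.natDegree_one]
  | succ n ih =>
    rw [ascFac_succ]
    refine le_trans (Polynomial.natDegree_mul_le) ?_
    have h2 : ((X : S[X]) + 1 + (n : S[X])).natDegree ≤ 1 := by
      refine le_trans (Polynomial.natDegree_add_le _ _) ?_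
      refine max_le (le_trans (Polynomial.natDegree_add_le _ _) ?_) ?_
      · exact max_le Polynomial.natDegree_X_le (by simp)
      · simp [Polynomial.natDegree_natCast]
    omega

theorem ascFac_add_eq {R : Type*} [CommSemiring R] (u v : R) (n : ℕ) :
    ascFac (u + v) n
      = ∑ i ∈ range (n + 1), (n.choose i : R) * (ascFac u i * ascFac v (n - i)) := by
  induction n with
  | zero => simp [ascFac]
  | succ n ih =>
    rw [ascFac_succ, ih, Finset.sum_mul]
    have key : ∀ i ∈ range (n + 1),
        (n.choose i : R) * (ascFac u i * ascFac v (n - i)) * (u + v + n)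
          = (n.choose i : R) * (ascFac u (i+1) * ascFac v (n - i))
            + (n.choose i : R) * (ascFac u i * ascFac v (n + 1 - i)) := by
      intro i hi
      rw [mem_range] at hi
      have h1 : n + 1 - i = (n - i) + 1 := by omega
      have h2 : (u + v + (n : R)) = (u + (i:R)) + (v + ((n - i : ℕ) : R)) := by
        have : ((n:ℕ) : R) = ((i : ℕ) : R) + ((n - i : ℕ) : R) := by
          rw [← Nat.cast_add]; congr 1; omega
        rw [this]; ring
      rw [h1, ascFac_succ, ascFac_succ, h2]
      ring
    rw [Finset.sum_congr rfl key, Finset.sum_add_distrib]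
    have A : (∑ i ∈ range (n + 1), (n.choose i : R) * (ascFac u (i+1) * ascFac v (n - i)))
        = ∑ i ∈ range (n + 2),
            (if i = 0 then 0 else (n.choose (i-1) : R)) * (ascFac u i * ascFac v (n + 1 - i)) := by
      rw [Finset.sum_range_succ'
        (fun i => (if i = 0 then 0 else (n.choose (i-1) : R))
          * (ascFac u i * ascFac v (n + 1 - i))) (n+1)]
      simp [Nat.succ_sub_succ]
    have B : (∑ i ∈ range (n + 1), (n.choose i : R) * (ascFac u i * ascFac v (n + 1 - i)))
        = ∑ i ∈ range (n + 2), (n.choose i : R) * (ascFac u i * ascFac v (n + 1 - i)) := by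
      rw [Finset.sum_range_succ
        (fun i => (n.choose i : R) * (ascFac u i * ascFac v (n + 1 - i))) (n+1)]
      rw [Nat.choose_eq_zero_of_lt (by omega)]
      simp
    rw [A, B, ← Finset.sum_add_distrib]
    apply Finset.sum_congr rfl
    intro i hi
    rw [← add_mul]
    congr 1
    cases i with
    | zero => simp
    | succ i =>
      rw [if_neg (Nat.succ_ne_zero _)]
      push_cast [Nat.succ_sub_one, Nat.choose_succ_succ]
      ring

/-- The identity with the sum taken over `range (n+1)`. -/
theorem stirling1_shifted_convolution_range (n k m : ℕ) :
    (∑ i ∈ Finset.range (n + 1),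
        stirling1 (i + 1) (k + 1) * stirling1 (n - i) m * n.choose i)
      = (k + m).choose k * stirling1 (n + 1) (k + m + 1) := by
  -- work in `ℕ[X][X]`, with `u = C X + 1` (inner variable) and `v = X` (outer variable)
  have hL : ((ascFac ((Polynomial.C (X : ℕ[X]) + 1) + (X : Polynomial ℕ[X])) n).coeff m).coeff k
      = ∑ i ∈ Finset.range (n + 1),
          stirling1 (i + 1) (k + 1) * stirling1 (n - i) m * n.choose i := by
    rw [ascFac_add_eq, Polynomial.finset_sum_coeff, Polynomial.finset_sum_coeff]
    apply Finset.sum_congr rfl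
    intro i _
    have h1 : ascFac (Polynomial.C (X : ℕ[X]) + 1) i
        = Polynomial.C (ascFac ((X : ℕ[X]) + 1) i) := by
      rw [map_ascFac' (S := Polynomial ℕ[X]) (Polynomial.C (R := ℕ[X])) ((X : ℕ[X]) + 1) i]
      congr 1
      simp
    rw [h1, Polynomial.coeff_natCast_mul, Polynomial.coeff_C_mul, coeff_ascFac_X,
      Polynomial.coeff_natCast_mul, Polynomial.coeff_mul_natCast, coeff_ascFac_X_add_one]
    simp only [Nat.cast_id]
    ring
  have hdeg : (ascFac ((X : ℕ[X]) + 1) n).natDegree < n + 1 :=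
    Nat.lt_succ_of_le (natDegree_ascFac_X_add_one_le n)
  have haev : ascFac ((Polynomial.C (X : ℕ[X]) + 1) + (X : Polynomial ℕ[X])) n
      = ∑ i ∈ Finset.range (n + 1),
          stirling1 (n + 1) (i + 1) • ((X : Polynomial ℕ[X]) + Polynomial.C (X : ℕ[X])) ^ i := by
    have hmap : (Polynomial.aeval ((X : Polynomial ℕ[X]) + Polynomial.C (X : ℕ[X])) :
        ℕ[X] →ₐ[ℕ] Polynomial ℕ[X]) (ascFac ((X : ℕ[X]) + 1) n)
        = ascFac ((Polynomial.C (X : ℕ[X]) + 1) + (X : Polynomial ℕ[X])) n := by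
      rw [map_ascFac]
      congr 1
      simp only [map_add, Polynomial.aeval_X, map_one]
      ring
    rw [← hmap, Polynomial.aeval_eq_sum_range' hdeg]
    apply Finset.sum_congr rfl
    intro i _
    rw [coeff_ascFac_X_add_one]
    norm_num
  have hR : ((ascFac ((Polynomial.C (X : ℕ[X]) + 1) + (X : Polynomial ℕ[X])) n).coeff m).coeff k
      = (k + m).choose k * stirling1 (n + 1) (k + m + 1) := by
    rw [haev, Polynomial.finset_sum_coeff, Polynomial.finset_sum_coeff]
    have hterm : ∀ i ∈ Finset.range (n + 1),
        ((stirling1 (n + 1) (i + 1)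
            • ((X : Polynomial ℕ[X]) + Polynomial.C (X : ℕ[X])) ^ i).coeff m).coeff k
          = if i = k + m then (k + m).choose k * stirling1 (n + 1) (k + m + 1) else 0 := by
      intro i _
      rw [nsmul_eq_mul, Polynomial.coeff_natCast_mul, Polynomial.coeff_X_add_C_pow,
        Polynomial.coeff_natCast_mul, Polynomial.coeff_mul_natCast, Polynomial.coeff_X_pow]
      by_cases him : m ≤ i
      · by_cases hik : i = k + m
        · subst hik
          rw [if_pos rfl, if_pos (show k = k + m - m by omega)]
          have : (k + m).choose m = (k + m).choose k := by
            rw [← Nat.choose_symm (Nat.le_add_right k m)]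
            congr 1
            omega
          simp only [Nat.cast_id, this]
          ring
        · rw [if_neg hik, if_neg (show ¬ (k = i - m) by omega)]
          simp
      · rw [Nat.choose_eq_zero_of_lt (show i < m by omega),
          if_neg (show ¬ (i = k + m) by omega)]
        simp
    rw [Finset.sum_congr rfl hterm, Finset.sum_ite_eq' (Finset.range (n+1)) (k+m)]
    by_cases hkm : k + m ∈ Finset.range (n + 1)
    · rw [if_pos hkm]
    · rw [if_neg hkm]
      rw [Finset.mem_range] at hkm
      rw [stirling1_eq_zero' (by omega)]
      simp
  rw [← hL, hR]

/-- Shifted Stirling convolution identity (Lemma 2 of Salminen–Stenlund 2021):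
`∑_{i=k}^{n-m} c(i+1,k+1) c(n-i,m) C(n,i) = C(k+m,k) c(n+1,k+m+1)`. -/
theorem stirling1_shifted_convolution (n k m : ℕ) :
    (∑ i ∈ Finset.Icc k (n - m),
        stirling1 (i + 1) (k + 1) * stirling1 (n - i) m * n.choose i)
      = (k + m).choose k * stirling1 (n + 1) (k + m + 1) := by
  rw [← stirling1_shifted_convolution_range n k m]
  apply Finset.sum_subset
  · intro i hi
    rw [Finset.mem_Icc] at hi
    rw [Finset.mem_range]
    omega
  · intro i hi hni
    rw [Finset.mem_range] at hi
    rw [Finset.mem_Icc] at hni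
    by_cases hik : i < k
    · rw [stirling1_eq_zero' (by omega)]
      ring
    · have : n - i < m := by omega
      rw [stirling1_eq_zero' this]
      ring
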